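/- Let a, b ∈ ℝ with a + 2b > 0, a − 2b > 0 and b ≠ 0. Then the set of solutions (z, w) ∈ ℝ² \ {(0,0)} of the system z(a·z² + 3b·zw + a·w² − 1) = −b·w³ and w(a·z² + 3b·zw + a·w² − 1) = −b·z³ consists exactly of the four points (c, c), (−c, −c), (d, −d), (−d, d), where c := 1/√(2(a + 2b)) and d := 1/√(2(a − 2b)). -/
import Mathlib


open MeasureTheory Set Filter

noncomputable section

theorem statement12 (a b : ℝ) (h₁ : 0 < a + 2 * b) (h₂ : 0 < a - 2 * b) (hb : b ≠ 0)
    (c d : ℝ) (hc : c = 1 / Real.sqrt (2 * (a + 2 * b)))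
    (hd : d = 1 / Real.sqrt (2 * (a - 2 * b))) :
    {zw : ℝ × ℝ | zw ≠ (0, 0) ∧
        zw.1 * (a * zw.1 ^ 2 + 3 * b * zw.1 * zw.2 + a * zw.2 ^ 2 - 1) = -(b * zw.2 ^ 3) ∧
        zw.2 * (a * zw.1 ^ 2 + 3 * b * zw.1 * zw.2 + a * zw.2 ^ 2 - 1) = -(b * zw.1 ^ 3)} =
      {(c, c), (-c, -c), (d, -d), (-d, d)} := by
  have hs1 : (0:ℝ) < 2 * (a + 2 * b) := by linarith
  have hs2 : (0:ℝ) < 2 * (a - 2 * b) := by linarith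
  have hcsq : (2 * (a + 2 * b)) * c ^ 2 = 1 := by
    rw [hc, div_pow, one_pow, Real.sq_sqrt hs1.le, mul_one_div, div_self hs1.ne']
  have hdsq : (2 * (a - 2 * b)) * d ^ 2 = 1 := by
    rw [hd, div_pow, one_pow, Real.sq_sqrt hs2.le, mul_one_div, div_self hs2.ne']
  have hcpos : 0 < c := by
    rw [hc]; positivity
  have hdpos : 0 < d := by
    rw [hd]; positivity
  ext ⟨z, w⟩
  simp only [Set.mem_setOf_eq, Set.mem_insert_iff, Set.mem_singleton_iff, Prod.mk.injEq,
    ne_eq, not_and]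
  constructor
  · rintro ⟨hne, e1, e2⟩
    have hne' : ¬ (z = 0 ∧ w = 0) := by
      exact fun ⟨hz0, hw0⟩ => hne hz0 hw0
    have f1 : (z - w) * ((a * z ^ 2 + 3 * b * z * w + a * w ^ 2 - 1)
        - b * (z ^ 2 + z * w + w ^ 2)) = 0 := by linear_combination e1 - e2
    have f2 : (z + w) * ((a * z ^ 2 + 3 * b * z * w + a * w ^ 2 - 1)
        + b * (z ^ 2 - z * w + w ^ 2)) = 0 := by linear_combination e1 + e2
    rcases mul_eq_zero.mp f1 with hzw | hQ1
    · have hwz : w = z := by linarith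
      subst hwz
      have hz0 : w ≠ 0 := by
        intro h; exact hne' ⟨h, h⟩
      have key : w * ((2 * (a + 2 * b)) * w ^ 2 - 1) = 0 := by linear_combination e1
      have key2 : (2 * (a + 2 * b)) * w ^ 2 - 1 = 0 := by
        rcases mul_eq_zero.mp key with h | h
        · exact absurd h hz0
        · exact h
      have : (w - c) * (w + c) = 0 := by
        have h3 : (2 * (a + 2 * b)) * ((w - c) * (w + c)) = 0 := by
          linear_combination key2 - hcsq
        rcases mul_eq_zero.mp h3 with h | h
        · exact absurd h hs1.ne'
        · exact h
      rcases mul_eq_zero.mp this with h | h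
      · left; constructor <;> linarith
      · right; left; constructor <;> linarith
    · rcases mul_eq_zero.mp f2 with hzw | hQ2
      · have hwz : w = -z := by linarith
        subst hwz
        have hz0 : z ≠ 0 := by
          intro h; exact hne' ⟨h, by rw [h, neg_zero]⟩
        have key : z * ((2 * (a - 2 * b)) * z ^ 2 - 1) = 0 := by linear_combination e1
        have key2 : (2 * (a - 2 * b)) * z ^ 2 - 1 = 0 := by
          rcases mul_eq_zero.mp key with h | h
          · exact absurd h hz0
          · exact h
        have : (z - d) * (z + d) = 0 := by
          have h3 : (2 * (a - 2 * b)) * ((z - d) * (z + d)) = 0 := by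
            linear_combination key2 - hdsq
          rcases mul_eq_zero.mp h3 with h | h
          · exact absurd h hs2.ne'
          · exact h
        rcases mul_eq_zero.mp this with h | h
        · right; right; left; constructor <;> linarith
        · right; right; right; constructor <;> linarith
      · exfalso
        have hsum : b * (2 * z ^ 2 + 2 * w ^ 2) = 0 := by linear_combination hQ2 - hQ1
        have hzw0 : z ^ 2 + w ^ 2 = 0 := by
          rcases mul_eq_zero.mp hsum with h | h
          · exact absurd h hb
          · linarith
        exact hne' ⟨by nlinarith [sq_nonneg z, sq_nonneg w], by nlinarith [sq_nonneg z, sq_nonneg w]⟩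
  · rintro (⟨hz, hw⟩ | ⟨hz, hw⟩ | ⟨hz, hw⟩ | ⟨hz, hw⟩) <;> rw [hz, hw]
    · exact ⟨fun h => absurd h hcpos.ne', by linear_combination c * hcsq,
        by linear_combination c * hcsq⟩
    · exact ⟨fun h => absurd (neg_eq_zero.mp h) hcpos.ne',
        by linear_combination (-c) * hcsq, by linear_combination (-c) * hcsq⟩
    · exact ⟨fun h => absurd h hdpos.ne', by linear_combination d * hdsq,
        by linear_combination (-d) * hdsq⟩
    · exact ⟨fun h => absurd (neg_eq_zero.mp h) hdpos.ne',
        by linear_combination (-d) * hdsq, by linear_combination d * hdsq⟩
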